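/- Let A ∈ ℝ^{n×n} and let u, v ∈ ℝ^n be nonzero with ⟨u,v⟩ = ⟨Au,v⟩ = ⟨u,Av⟩ = ⟨Au,Av⟩ = 0. For any s ∈ ℝ between ⟨Au,u⟩/⟨u,u⟩ and ⟨Av,v⟩/⟨v,v⟩ (inclusive), there exist α₁, α₂ ∈ ℝ with w = α₁u + α₂v ≠ 0 such that ⟨Aw,w⟩/⟨w,w⟩ = s. -/

import Mathlib

open Matrix
open scoped RealInnerProductSpace

noncomputable def mulVecE {ι : Type*} [Fintype ι] (A : Matrix ι ι ℝ)
    (x : EuclideanSpace ℝ ι) : EuclideanSpace ℝ ι := WithLp.toLp 2 (A.mulVec x)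

open Classical in
noncomputable def ang {ι : Type*} [Fintype ι] (a b : EuclideanSpace ℝ ι) : ℝ :=
  if a = 0 ∨ b = 0 then 0 else Real.arccos (⟪a, b⟫ / (‖a‖ * ‖b‖))

noncomputable def zA {ι : Type*} [Fintype ι] (A : Matrix ι ι ℝ)
    (x : EuclideanSpace ℝ ι) : ℂ :=
  ((‖mulVecE A x‖ / ‖x‖ : ℝ) : ℂ) * Complex.exp (Complex.I * (ang (mulVecE A x) x : ℝ))

noncomputable def SRG {ι : Type*} [Fintype ι] (A : Matrix ι ι ℝ) : Set ℂ :=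
  {z | ∃ x : EuclideanSpace ℝ ι, x ≠ 0 ∧ (z = zA A x ∨ z = (starRingEnd ℂ) (zA A x))}

theorem stmt7 {n : ℕ} (A : Matrix (Fin n) (Fin n) ℝ) (u v : EuclideanSpace ℝ (Fin n))
    (hu : u ≠ 0) (hv : v ≠ 0) (h1 : ⟪u, v⟫ = 0) (h2 : ⟪mulVecE A u, v⟫ = 0)
    (h3 : ⟪u, mulVecE A v⟫ = 0) (h4 : ⟪mulVecE A u, mulVecE A v⟫ = 0) (s : ℝ)
    (hs : s ∈ Set.uIcc (⟪mulVecE A u, u⟫ / ⟪u, u⟫) (⟪mulVecE A v, v⟫ / ⟪v, v⟫)) :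
    ∃ α₁ α₂ : ℝ, α₁ • u + α₂ • v ≠ 0 ∧
      ⟪mulVecE A (α₁ • u + α₂ • v), α₁ • u + α₂ • v⟫ / ⟪α₁ • u + α₂ • v, α₁ • u + α₂ • v⟫
        = s := by
  have hlin : ∀ α β : ℝ, mulVecE A (α • u + β • v) = α • mulVecE A u + β • mulVecE A v := by
    intro α β
    ext i
    simp [mulVecE, Matrix.mulVec, dotProduct, PiLp.add_apply, PiLp.smul_apply,
      mul_add, Finset.sum_add_distrib, Finset.mul_sum, mul_left_comm]
  have hp : (0:ℝ) < ⟪u,u⟫ := by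
    rw [real_inner_self_eq_norm_sq]; exact pow_pos (norm_pos_iff.mpr hu) 2
  have hq : (0:ℝ) < ⟪v,v⟫ := by
    rw [real_inner_self_eq_norm_sq]; exact pow_pos (norm_pos_iff.mpr hv) 2
  have h1' : ⟪v, u⟫ = 0 := by rw [real_inner_comm]; exact h1
  have h2' : ⟪v, mulVecE A u⟫ = 0 := by rw [real_inner_comm]; exact h2
  have h3' : ⟪mulVecE A v, u⟫ = 0 := by rw [real_inner_comm]; exact h3
  have keyN : ∀ α β : ℝ, ⟪mulVecE A (α • u + β • v), α • u + β • v⟫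
      = α^2 * ⟪mulVecE A u, u⟫ + β^2 * ⟪mulVecE A v, v⟫ := by
    intro α β
    rw [hlin]
    simp only [inner_add_left, inner_add_right, real_inner_smul_left, real_inner_smul_right,
      h2, h2', h3, h3', mul_zero, add_zero, zero_add]
    ring
  have keyD : ∀ α β : ℝ, ⟪(α • u + β • v : EuclideanSpace ℝ (Fin n)), α • u + β • v⟫
      = α^2 * ⟪u,u⟫ + β^2 * ⟪v,v⟫ := by
    intro α β
    simp only [inner_add_left, inner_add_right, real_inner_smul_left, real_inner_smul_right,
      h1, h1', mul_zero, add_zero, zero_add]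
    ring
  set a := ⟪mulVecE A u, u⟫ / ⟪u,u⟫ with ha
  set b := ⟪mulVecE A v, v⟫ / ⟪v,v⟫ with hb
  have hAu : ⟪mulVecE A u, u⟫ = a * ⟪u,u⟫ := (div_mul_cancel₀ _ hp.ne').symm
  have hAv : ⟪mulVecE A v, v⟫ = b * ⟪v,v⟫ := (div_mul_cancel₀ _ hq.ne').symm
  rcases eq_or_ne a b with hab | hab
  · have hsa : s = a := by
      rw [hab, Set.uIcc_self] at hs
      simpa [hab] using hs
    refine ⟨1, 0, ?_, ?_⟩
    · simpa using hu
    · rw [keyN, keyD, hAu, hsa]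
      norm_num
      exact mul_div_cancel_right₀ _ (pow_pos (norm_pos_iff.mpr hu) 2).ne'
  · set t := (s - a) / (b - a) with hterm
    have hd : b - a ≠ 0 := sub_ne_zero.mpr (Ne.symm hab)
    have ht0 : 0 ≤ t := by
      rcases le_total a b with h | h
      · rw [Set.uIcc_of_le h] at hs
        exact div_nonneg (by linarith [hs.1]) (by linarith)
      · rw [Set.uIcc_of_ge h] at hs
        have hba : b - a < 0 := lt_of_le_of_ne (by linarith) hd
        rw [div_nonneg_iff]
        exact Or.inr ⟨by linarith [hs.2], hba.le⟩
    have ht1 : t ≤ 1 := by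
      rcases le_total a b with h | h
      · rw [Set.uIcc_of_le h] at hs
        have hba : 0 < b - a := lt_of_le_of_ne (by linarith) (Ne.symm hd)
        exact (div_le_one hba).mpr (by linarith [hs.2])
      · rw [Set.uIcc_of_ge h] at hs
        have hba : b - a < 0 := lt_of_le_of_ne (by linarith) hd
        rw [div_le_one_iff]
        exact Or.inr (Or.inr ⟨hba, by linarith [hs.1]⟩)
    have hsum : (1 - t) * a + t * b = s := by
      rw [hterm]
      field_simp
      ring
    set α₁ := Real.sqrt ((1 - t) / ⟪u,u⟫) with hα₁def
    set α₂ := Real.sqrt (t / ⟪v,v⟫) with hα₂def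
    have hα₁ : α₁^2 = (1 - t) / ⟪u,u⟫ := Real.sq_sqrt (div_nonneg (by linarith) hp.le)
    have hα₂ : α₂^2 = t / ⟪v,v⟫ := Real.sq_sqrt (div_nonneg ht0 hq.le)
    have hD : ⟪(α₁ • u + α₂ • v : EuclideanSpace ℝ (Fin n)), α₁ • u + α₂ • v⟫ = 1 := by
      rw [keyD, hα₁, hα₂, div_mul_cancel₀ _ hp.ne', div_mul_cancel₀ _ hq.ne']
      ring
    have hN : ⟪mulVecE A (α₁ • u + α₂ • v), α₁ • u + α₂ • v⟫ = s := by
      rw [keyN, hα₁, hα₂, hAu, hAv]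
      have e1 : (1 - t) / ⟪u,u⟫ * (a * ⟪u,u⟫) = (1 - t) * a := by
        rw [div_mul_eq_mul_div, mul_div_assoc, mul_div_cancel_right₀ _ hp.ne']
      have e2 : t / ⟪v,v⟫ * (b * ⟪v,v⟫) = t * b := by
        rw [div_mul_eq_mul_div, mul_div_assoc, mul_div_cancel_right₀ _ hq.ne']
      rw [e1, e2]
      exact hsum
    refine ⟨α₁, α₂, ?_, ?_⟩
    · intro h0
      rw [h0] at hD
      simp at hD
    · rw [hN, hD, div_one]
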